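/- Let μ : M → ℝ be a linear pre-expectation on a linear subspace M ∋ 1 of L^∞(Ω,F). Then the maximal extension μ̂(X) = inf{μX₀ : X₀ ∈ M, X₀ ≥ X} satisfies μ̂(X) = max{νX : ν ∈ ba₊¹(Ω,F), ν|_M = μ} for all X ∈ L^∞(Ω,F). -/

import Mathlib

open Set

def IsLinfty {Ω : Type*} [MeasurableSpace Ω] (X : Ω → ℝ) : Prop :=
  Measurable X ∧ ∃ C : ℝ, ∀ ω, |X ω| ≤ C

/-- Elements of `ba₊¹(Ω,F)`, viewed as positive normalized linear functionals on
`L^∞(Ω,F)` (finitely additive probability measures). -/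
def IsBa1 {Ω : Type*} [MeasurableSpace Ω] (ν : (Ω → ℝ) →ₗ[ℝ] ℝ) : Prop :=
  (∀ X : Ω → ℝ, IsLinfty X → (∀ ω, 0 ≤ X ω) → 0 ≤ ν X) ∧
  ν (fun _ : Ω => (1:ℝ)) = 1

/-- The maximal extension `μ̂(X) = inf { μ(X₀) : X₀ ∈ M, X₀ ≥ X }` of a linear
pre-expectation `μ` on `M`. -/
noncomputable def muHat {Ω : Type*} (M : Submodule ℝ (Ω → ℝ)) (μ : M →ₗ[ℝ] ℝ)
    (X : Ω → ℝ) : ℝ :=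
  sInf {r : ℝ | ∃ X₀ : M, (∀ ω, X ω ≤ (X₀ : Ω → ℝ) ω) ∧ r = μ X₀}

/-- The bounded measurable functions form a submodule. -/
def Linf (Ω : Type*) [MeasurableSpace Ω] : Submodule ℝ (Ω → ℝ) where
  carrier := {X | IsLinfty X}
  add_mem' := by
    rintro X Y ⟨hXm, CX, hCX⟩ ⟨hYm, CY, hCY⟩
    exact ⟨hXm.add hYm, CX + CY, fun ω => (abs_add_le _ _).trans (add_le_add (hCX ω) (hCY ω))⟩
  zero_mem' := ⟨measurable_const, 0, fun ω => by simp⟩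
  smul_mem' := by
    rintro c X ⟨hXm, CX, hCX⟩
    refine ⟨hXm.const_mul c, |c| * CX, fun ω => ?_⟩
    simp only [Pi.smul_apply, smul_eq_mul, abs_mul]
    exact mul_le_mul_of_nonneg_left (hCX ω) (abs_nonneg c)

set_option maxHeartbeats 1000000 in
theorem stmt8 {Ω : Type*} [MeasurableSpace Ω]
    (M : Submodule ℝ (Ω → ℝ)) (hM : ∀ X ∈ M, IsLinfty X)
    (hone : (fun _ : Ω => (1:ℝ)) ∈ M)
    (μ : M →ₗ[ℝ] ℝ)
    (hmono : ∀ X Y : M, (∀ ω, (X : Ω → ℝ) ω ≤ (Y : Ω → ℝ) ω) → μ X ≤ μ Y)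
    (hnorm : μ ⟨fun _ : Ω => (1:ℝ), hone⟩ = 1) :
    ∀ X : Ω → ℝ, IsLinfty X →
      -- the max in `μ̂(X) = max { νX : ν ∈ ba₊¹, ν|_M = μ }` is attained ...
      (∃ ν : (Ω → ℝ) →ₗ[ℝ] ℝ, IsBa1 ν ∧ (∀ Y : M, ν (Y : Ω → ℝ) = μ Y) ∧
        ν X = muHat M μ X) ∧
      -- ... and every such `ν` is dominated by `μ̂`
      (∀ ν : (Ω → ℝ) →ₗ[ℝ] ℝ, IsBa1 ν → (∀ Y : M, ν (Y : Ω → ℝ) = μ Y) →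
        ν X ≤ muHat M μ X) := by
  intro X hX
  classical
  set E : Submodule ℝ (Ω → ℝ) := Linf Ω with hE
  set p : E → ℝ := fun Y => muHat M μ (Y : Ω → ℝ) with hp
  -- basic facts about p
  have hSne : ∀ Y : E, {r : ℝ | ∃ X₀ : M, (∀ ω, (Y:Ω→ℝ) ω ≤ (X₀ : Ω → ℝ) ω) ∧ r = μ X₀}.Nonempty := by
    intro Y
    obtain ⟨hm, C, hC⟩ := Y.2
    refine ⟨μ (C • ⟨_, hone⟩), C • ⟨_, hone⟩, fun ω => ?_, rfl⟩
    simp only [SetLike.val_smul, Pi.smul_apply, smul_eq_mul, mul_one]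
    exact (le_abs_self _).trans (hC ω)
  have hSbdd : ∀ Y : E, BddBelow {r : ℝ | ∃ X₀ : M, (∀ ω, (Y:Ω→ℝ) ω ≤ (X₀ : Ω → ℝ) ω) ∧ r = μ X₀} := by
    intro Y
    obtain ⟨hm, C, hC⟩ := Y.2
    refine ⟨μ ((-C) • ⟨_, hone⟩), ?_⟩
    rintro r ⟨X₀, h₀, rfl⟩
    refine hmono _ _ fun ω => ?_
    simp only [SetLike.val_smul, Pi.smul_apply, smul_eq_mul, mul_one]
    exact (neg_le_of_abs_le (hC ω)).trans (h₀ ω)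
  have hple : ∀ (Y : E) (X₀ : M), (∀ ω, (Y:Ω→ℝ) ω ≤ (X₀:Ω→ℝ) ω) → p Y ≤ μ X₀ :=
    fun Y X₀ h => csInf_le (hSbdd Y) ⟨X₀, h, rfl⟩
  have hlep : ∀ (Y : E) (b : ℝ), (∀ X₀ : M, (∀ ω, (Y:Ω→ℝ) ω ≤ (X₀:Ω→ℝ) ω) → b ≤ μ X₀) → b ≤ p Y := by
    intro Y b h
    refine le_csInf (hSne Y) ?_
    rintro r ⟨X₀, h₀, rfl⟩
    exact h X₀ h₀
  have pMadd : ∀ (Y₀ : M) (Z : E), p (⟨(Y₀:Ω→ℝ), hM _ Y₀.2⟩ + Z) = μ Y₀ + p Z := by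
    intro Y₀ Z
    apply le_antisymm
    · rw [← sub_le_iff_le_add']
      refine hlep Z _ fun X₁ h₁ => ?_
      rw [sub_le_iff_le_add']
      have := hple (⟨(Y₀:Ω→ℝ), hM _ Y₀.2⟩ + Z) (Y₀ + X₁) (fun ω => by
        simp only [Submodule.coe_add, Pi.add_apply]
        exact add_le_add le_rfl (h₁ ω))
      rwa [map_add] at this
    · refine hlep _ _ fun X₀ h₀ => ?_
      rw [← le_sub_iff_add_le']
      have := hple Z (X₀ - Y₀) (fun ω => by
        have h := h₀ ω
        simp only [Submodule.coe_add, Pi.add_apply] at h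
        simp only [Submodule.coe_sub, Pi.sub_apply]
        linarith)
      rwa [map_sub] at this
  have pzero : p 0 = 0 := by
    apply le_antisymm
    · have := hple 0 0 (fun ω => by simp)
      simpa using this
    · refine hlep 0 0 fun X₀ h₀ => ?_
      have := hmono 0 X₀ (fun ω => by simpa using h₀ ω)
      simpa using this
  have pMeq : ∀ Y₀ : M, p ⟨(Y₀:Ω→ℝ), hM _ Y₀.2⟩ = μ Y₀ := by
    intro Y₀
    have := pMadd Y₀ 0
    simpa [pzero] using this
  have padd : ∀ Y Z : E, p (Y + Z) ≤ p Y + p Z := by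
    intro Y Z
    have h1 : ∀ X₀ : M, (∀ ω, (Y:Ω→ℝ) ω ≤ (X₀:Ω→ℝ) ω) → ∀ X₁ : M,
        (∀ ω, (Z:Ω→ℝ) ω ≤ (X₁:Ω→ℝ) ω) → p (Y + Z) ≤ μ X₀ + μ X₁ := by
      intro X₀ h₀ X₁ h₁
      have := hple (Y + Z) (X₀ + X₁) (fun ω => by
        simp only [Submodule.coe_add, Pi.add_apply]
        exact add_le_add (h₀ ω) (h₁ ω))
      rwa [map_add] at this
    have h2 : ∀ X₀ : M, (∀ ω, (Y:Ω→ℝ) ω ≤ (X₀:Ω→ℝ) ω) → p (Y + Z) - μ X₀ ≤ p Z :=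
      fun X₀ h₀ => hlep Z _ (fun X₁ h₁ => by linarith [h1 X₀ h₀ X₁ h₁])
    have h3 : p (Y + Z) - p Z ≤ p Y := hlep Y _ (fun X₀ h₀ => by linarith [h2 X₀ h₀])
    linarith
  have phom : ∀ (c : ℝ), 0 < c → ∀ Y : E, p (c • Y) = c * p Y := by
    intro c hc Y
    apply le_antisymm
    · have h1 : ∀ X₀ : M, (∀ ω, (Y:Ω→ℝ) ω ≤ (X₀:Ω→ℝ) ω) → p (c • Y) ≤ c * μ X₀ := by
        intro X₀ h₀
        have := hple (c • Y) (c • X₀) (fun ω => by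
          simp only [SetLike.val_smul, Pi.smul_apply, smul_eq_mul]
          exact mul_le_mul_of_nonneg_left (h₀ ω) hc.le)
        rwa [map_smul, smul_eq_mul] at this
      have h2 : p (c • Y) / c ≤ p Y := by
        refine hlep Y _ fun X₀ h₀ => ?_
        rw [div_le_iff₀ hc, mul_comm]
        exact h1 X₀ h₀
      rw [mul_comm]
      exact (div_le_iff₀ hc).mp h2
    · refine hlep (c • Y) _ fun X₀ h₀ => ?_
      have hY : ∀ ω, (Y:Ω→ℝ) ω ≤ ((c⁻¹ • X₀ : M):Ω→ℝ) ω := by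
        intro ω
        have h := h₀ ω
        simp only [SetLike.val_smul, Pi.smul_apply, smul_eq_mul] at h ⊢
        have h1 : c⁻¹ * (c * (Y:Ω→ℝ) ω) ≤ c⁻¹ * (X₀:Ω→ℝ) ω :=
          mul_le_mul_of_nonneg_left h (inv_nonneg.mpr hc.le)
        rwa [inv_mul_cancel_left₀ hc.ne'] at h1
      have := hple Y _ hY
      rw [map_smul, smul_eq_mul] at this
      have h2 := mul_le_mul_of_nonneg_left this hc.le
      rwa [← mul_assoc, mul_inv_cancel₀ hc.ne', one_mul] at h2
  have pnonpos : ∀ Y : E, (∀ ω, (Y:Ω→ℝ) ω ≤ 0) → p Y ≤ 0 := by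
    intro Y h
    have := hple Y 0 (fun ω => by simpa using h ω)
    simpa using this
  set x : E := ⟨X, hX⟩ with hx
  have psx : ∀ s : ℝ, 0 ≤ s → p (s • x) = s * p x := by
    intro s hs
    rcases hs.eq_or_lt with h | h
    · rw [← h]; simp [pzero]
    · exact phom s h x
  set q : E → ℝ := fun Y => sInf {r : ℝ | ∃ s : ℝ, 0 ≤ s ∧ r = p (Y + s • x) - s * p x} with hq
  have hTne : ∀ Y : E, {r : ℝ | ∃ s : ℝ, 0 ≤ s ∧ r = p (Y + s • x) - s * p x}.Nonempty :=
    fun Y => ⟨p Y, 0, le_refl 0, by simp⟩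
  have hTbdd : ∀ Y : E, BddBelow {r : ℝ | ∃ s : ℝ, 0 ≤ s ∧ r = p (Y + s • x) - s * p x} := by
    intro Y
    refine ⟨-p (-Y), ?_⟩
    rintro r ⟨s, hs, rfl⟩
    have h1 : p (s • x) ≤ p (Y + s • x) + p (-Y) := by
      have h := padd (Y + s • x) (-Y)
      rwa [show Y + s • x + -Y = s • x by abel] at h
    rw [psx s hs] at h1
    linarith
  have hqle : ∀ (Y : E) (s : ℝ), 0 ≤ s → q Y ≤ p (Y + s • x) - s * p x :=
    fun Y s hs => csInf_le (hTbdd Y) ⟨s, hs, rfl⟩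
  have hqlep : ∀ Y : E, q Y ≤ p Y := fun Y => by simpa using hqle Y 0 le_rfl
  have hleq : ∀ (Y : E) (b : ℝ), (∀ s : ℝ, 0 ≤ s → b ≤ p (Y + s • x) - s * p x) → b ≤ q Y := by
    intro Y b h
    refine le_csInf (hTne Y) ?_
    rintro r ⟨s, hs, rfl⟩
    exact h s hs
  have qadd : ∀ Y Z : E, q (Y + Z) ≤ q Y + q Z := by
    intro Y Z
    have h1 : ∀ s : ℝ, 0 ≤ s → ∀ t : ℝ, 0 ≤ t →
        q (Y + Z) ≤ (p (Y + s • x) - s * p x) + (p (Z + t • x) - t * p x) := by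
      intro s hs t ht
      have h2 := hqle (Y + Z) (s + t) (by linarith)
      have h3 := padd (Y + s • x) (Z + t • x)
      rw [show Y + s • x + (Z + t • x) = Y + Z + (s + t) • x by rw [add_smul]; abel] at h3
      linarith
    have h2 : ∀ s : ℝ, 0 ≤ s → q (Y + Z) - (p (Y + s • x) - s * p x) ≤ q Z :=
      fun s hs => hleq Z _ (fun t ht => by linarith [h1 s hs t ht])
    have h3 : q (Y + Z) - q Z ≤ q Y := hleq Y _ (fun s hs => by linarith [h2 s hs])
    linarith
  have qhom : ∀ c : ℝ, 0 < c → ∀ Y : E, q (c • Y) = c * q Y := by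
    intro c hc Y
    apply le_antisymm
    · have h1 : ∀ s : ℝ, 0 ≤ s → q (c • Y) ≤ c * (p (Y + s • x) - s * p x) := by
        intro s hs
        have h2 := hqle (c • Y) (c * s) (by positivity)
        rw [show c • Y + (c * s) • x = c • (Y + s • x) by rw [smul_add, mul_smul]] at h2
        rw [phom c hc] at h2
        have : c * (p (Y + s • x) - s * p x) = c * p (Y + s • x) - c * s * p x := by ring
        rw [this]
        linarith [h2]
      have h2 : q (c • Y) / c ≤ q Y := by
        refine hleq Y _ fun s hs => ?_
        rw [div_le_iff₀ hc, mul_comm]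
        exact h1 s hs
      rw [mul_comm]
      exact (div_le_iff₀ hc).mp h2
    · refine hleq (c • Y) _ fun s hs => ?_
      have h1 : q Y ≤ p (Y + (s / c) • x) - (s / c) * p x := hqle Y (s / c) (by positivity)
      have h2 : p (c • Y + s • x) = c * p (Y + (s / c) • x) := by
        rw [← phom c hc, smul_add, smul_smul, mul_div_cancel₀ _ hc.ne']
      rw [h2]
      calc c * q Y ≤ c * (p (Y + (s / c) • x) - (s / c) * p x) :=
            mul_le_mul_of_nonneg_left h1 hc.le
        _ = c * p (Y + (s / c) • x) - s * p x := by field_simp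
  have qM : ∀ Y₀ : M, q ⟨(Y₀:Ω→ℝ), hM _ Y₀.2⟩ = μ Y₀ := by
    intro Y₀
    have key : ∀ s : ℝ, 0 ≤ s →
        p ((⟨(Y₀:Ω→ℝ), hM _ Y₀.2⟩ : E) + s • x) - s * p x = μ Y₀ := by
      intro s hs
      rw [pMadd Y₀ (s • x), psx s hs]
      ring
    apply le_antisymm
    · calc q _ ≤ _ := hqle _ 0 le_rfl
        _ = μ Y₀ := key 0 le_rfl
    · exact hleq _ _ fun s hs => (key s hs).ge
  have qnegx : q (-x) ≤ -p x := by
    have h := hqle (-x) 1 zero_le_one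
    rw [show -x + (1:ℝ) • x = 0 by rw [one_smul]; abel] at h
    rw [pzero] at h
    linarith
  -- Hahn–Banach extension
  set M' : Submodule ℝ E := M.comap E.subtype with hM'
  have hmemM' : ∀ y : M', ((y : E) : Ω → ℝ) ∈ M := fun y => y.2
  set ι : M' →ₗ[ℝ] M :=
    { toFun := fun y => ⟨((y : E) : Ω → ℝ), y.2⟩
      map_add' := fun a b => rfl
      map_smul' := fun c a => rfl } with hι
  set f : E →ₗ.[ℝ] ℝ := ⟨M', μ.comp ι⟩ with hf
  have hfq : ∀ y : f.domain, f y ≤ q y := by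
    intro y
    have h1 : f y = μ ⟨((y : E) : Ω → ℝ), y.2⟩ := rfl
    have h2 : ((y : E) : E) = (⟨((y : E) : Ω → ℝ), hM _ y.2⟩ : E) := Subtype.ext rfl
    rw [h1, ← qM ⟨((y : E) : Ω → ℝ), y.2⟩]
  obtain ⟨g, hg_ext, hg_le⟩ := exists_extension_of_le_sublinear f q qhom qadd hfq
  obtain ⟨W, hW⟩ := Submodule.exists_isCompl E
  set π : (Ω → ℝ) →ₗ[ℝ] E := Submodule.linearProjOfIsCompl E W hW with hπ
  set ν : (Ω → ℝ) →ₗ[ℝ] ℝ := g.comp π with hν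
  have hνval : ∀ (Z : Ω → ℝ) (hZ : IsLinfty Z), ν Z = g ⟨Z, hZ⟩ := by
    intro Z hZ
    have h1 : π Z = ⟨Z, hZ⟩ := Submodule.linearProjOfIsCompl_apply_left hW ⟨Z, hZ⟩
    show g (π Z) = g ⟨Z, hZ⟩
    rw [h1]
  have gM : ∀ Y₀ : M, g ⟨(Y₀:Ω→ℝ), hM _ Y₀.2⟩ = μ Y₀ := by
    intro Y₀
    have hmem : (⟨(Y₀:Ω→ℝ), hM _ Y₀.2⟩ : E) ∈ M' := Y₀.2
    have h := hg_ext ⟨⟨(Y₀:Ω→ℝ), hM _ Y₀.2⟩, hmem⟩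
    rw [h]
    show μ (ι _) = μ Y₀
    exact congrArg μ (Subtype.ext rfl)
  have hpx : p x = muHat M μ X := rfl
  constructor
  · refine ⟨ν, ⟨?_, ?_⟩, ?_, ?_⟩
    · -- positivity
      intro Z hZ hZ0
      rw [hνval Z hZ]
      have h1 : g (-(⟨Z, hZ⟩ : E)) ≤ q (-(⟨Z, hZ⟩ : E)) := hg_le _
      have h2 : q (-(⟨Z, hZ⟩ : E)) ≤ p (-(⟨Z, hZ⟩ : E)) := hqlep _
      have h3 : p (-(⟨Z, hZ⟩ : E)) ≤ 0 := by
        refine pnonpos _ fun ω => ?_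
        simp only [Submodule.coe_neg, Pi.neg_apply]
        exact neg_nonpos.mpr (hZ0 ω)
      have h4 : g (-(⟨Z, hZ⟩ : E)) = -g ⟨Z, hZ⟩ := map_neg g _
      linarith
    · -- normalization
      rw [hνval _ (hM _ hone)]
      have := gM ⟨fun _ => (1:ℝ), hone⟩
      rw [this, hnorm]
    · -- extension of μ
      intro Y
      rw [hνval _ (hM _ Y.2)]
      exact gM Y
    · -- attains muHat at X
      rw [hνval X hX]
      have h1 : g x ≤ q x := hg_le x
      have h2 : q x ≤ p x := hqlep x
      have h3 : g (-x) ≤ q (-x) := hg_le _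
      have h4 : g (-x) = -g x := map_neg g _
      have h5 : g x = p x := by linarith [qnegx]
      rw [← hpx]
      exact h5
  · -- every extension is dominated
    intro ν' hba hext
    obtain ⟨hm, C, hC⟩ := hX
    show ν' X ≤ sInf {r : ℝ | ∃ X₀ : M, (∀ ω, X ω ≤ (X₀ : Ω → ℝ) ω) ∧ r = μ X₀}
    refine le_csInf ?_ ?_
    · refine ⟨μ (C • ⟨_, hone⟩), C • ⟨_, hone⟩, fun ω => ?_, rfl⟩
      simp only [SetLike.val_smul, Pi.smul_apply, smul_eq_mul, mul_one]
      exact (le_abs_self _).trans (hC ω)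
    · rintro r ⟨X₀, h₀, rfl⟩
      obtain ⟨hm₀, C₀, hC₀⟩ := hM _ X₀.2
      have hD : IsLinfty ((X₀ : Ω → ℝ) - X) := by
        refine ⟨hm₀.sub hm, C₀ + C, fun ω => ?_⟩
        exact (abs_sub _ _).trans (add_le_add (hC₀ ω) (hC ω))
      have h1 : 0 ≤ ν' ((X₀ : Ω → ℝ) - X) :=
        hba.1 _ hD (fun ω => sub_nonneg.mpr (h₀ ω))
      rw [map_sub, hext X₀] at h1
      linarith
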